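/- arXiv:2211.15361 — 2 statements merged into one kernel-verified Lean document; each statement's English description precedes it below -/
import Mathlib

section
/- If A is an n×n Hermitian positive definite matrix and B is an n×n Hermitian positive semidefinite matrix whose diagonal entries are all strictly positive, then the Hadamard (entrywise) product A ⊙ B is positive definite. -/
open Matrix
open scoped ComplexOrder

theorem stmt1 (n : ℕ) (A B : Matrix (Fin n) (Fin n) ℂ)
    (hA : A.PosDef) (hB : B.PosSemidef) (hdiag : ∀ i, 0 < (B i i).re) :
    (Matrix.hadamard A B).PosDef := by
  obtain ⟨C, hC⟩ : ∃ C : Matrix (Fin n) (Fin n) ℂ, B = Cᴴ * C := by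
    open scoped MatrixOrder in
    exact CStarAlgebra.nonneg_iff_eq_star_mul_self.mp hB.nonneg
  refine Matrix.PosDef.of_dotProduct_mulVec_pos (Matrix.IsHermitian.ext fun i j => ?_) fun x hx => ?_
  · simp only [Matrix.conjTranspose_apply, Matrix.hadamard_apply, star_mul']
    rw [hA.1.apply, hB.1.apply]
  · set y : Fin n → Fin n → ℂ := fun k j => C k j * x j with hy
    have key : star x ⬝ᵥ (Matrix.hadamard A B) *ᵥ x
        = ∑ k, star (y k) ⬝ᵥ A *ᵥ (y k) := by
      subst hC
      simp only [dotProduct, mulVec, Matrix.hadamard_apply, Matrix.mul_apply,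
        Matrix.conjTranspose_apply, Pi.star_apply, hy, star_mul', Finset.mul_sum,
        Finset.sum_mul]
      conv_lhs => enter [2, i]; rw [Finset.sum_comm]
      rw [Finset.sum_comm]
      refine Finset.sum_congr rfl fun k _ => Finset.sum_congr rfl fun i _ =>
        Finset.sum_congr rfl fun j _ => ?_
      ring
    rw [key]
    obtain ⟨i, hi⟩ := Function.ne_iff.mp hx
    have hBii : ∃ k, C k i ≠ 0 := by
      by_contra h
      push_neg at h
      have : B i i = 0 := by
        rw [hC]
        simp [Matrix.mul_apply, Matrix.conjTranspose_apply, h]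
      simpa [this] using hdiag i
    obtain ⟨k, hk⟩ := hBii
    refine Finset.sum_pos' (fun l _ => hA.posSemidef.dotProduct_mulVec_nonneg (y l)) ⟨k, Finset.mem_univ k, ?_⟩
    refine hA.dotProduct_mulVec_pos (Function.ne_iff.mpr ⟨i, ?_⟩)
    simpa [hy] using mul_ne_zero hk hi
end

section
/- Let f_1,...,f_K ∈ [0,1) be distinct with K < N, let A be the N×K Vandermonde matrix of sinusoids a(f_k), A' the matrix of their derivatives, and let Φ ∈ ℂ^{K×L} have full row rank. Then the (L+1)K × LN matrix obtained by stacking I_L ⊗ Aᴴ on top of (Φᵀ * A')ᴴ has full row rank (L+1)K, where ⊗ is the Kronecker product and * is the Khatri–Rao product. -/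
open Matrix Complex
open scoped Kronecker

/-- The complex sinusoid vector `a(f) ∈ ℂ^N`, entries `e^{2πi j f}` for `j = 0,…,N-1`. -/
noncomputable def sinusoid (N : ℕ) (f : ℝ) : Fin N → ℂ :=
  fun j => Complex.exp (2 * Real.pi * Complex.I * (j : ℕ) * (f : ℂ))

/-- The entrywise derivative `a'(f)`, entries `2πi j e^{2πi j f}`. -/
noncomputable def sinusoidDeriv (N : ℕ) (f : ℝ) : Fin N → ℂ :=
  fun j => 2 * Real.pi * Complex.I * (j : ℕ) *
    Complex.exp (2 * Real.pi * Complex.I * (j : ℕ) * (f : ℂ))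

/-- Khatri–Rao (column-wise Kronecker) product. -/
def khatriRao {n q K : ℕ} (A : Matrix (Fin n) (Fin K) ℂ) (B : Matrix (Fin q) (Fin K) ℂ) :
    Matrix (Fin n × Fin q) (Fin K) ℂ :=
  fun p k => A p.1 k * B p.2 k


open Polynomial

lemma psum_deriv (p : ℂ[X]) (z : ℂ) :
    p.sum (fun m a => a * m * z ^ m) = z * p.derivative.eval z := by
  induction p using Polynomial.induction_on' with
  | add p q hp hq =>
      rw [Polynomial.sum_add_index p q _ (fun m => by ring) (fun m a b => by ring),
        derivative_add, eval_add, mul_add, hp, hq]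
  | monomial n a =>
      rw [Polynomial.sum_monomial_index a _ (by ring), derivative_monomial, eval_monomial]
      cases n with
      | zero => simp
      | succ m => push_cast; rw [pow_succ]; ring

lemma psum_eval (p : ℂ[X]) (z : ℂ) :
    p.sum (fun m a => a * z ^ m) = p.eval z := (Polynomial.eval_eq_sum).symm

lemma psum_vanish {N : ℕ} (p : ℂ[X]) (hp : p.natDegree < N) (F : ℕ → ℂ)
    (hF : ∀ n < N, F n = 0) : p.sum (fun m a => a * F m) = 0 := by
  rw [Polynomial.sum_def]
  exact Finset.sum_eq_zero fun m hm => by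
    rw [hF m (lt_of_le_of_lt (Polynomial.le_natDegree_of_mem_supp m hm) hp), mul_zero]

lemma psum_split {K : ℕ} (p : ℂ[X]) (w : Fin K → ℂ) (c : Fin K → ℂ) (γ : ℂ) (z : ℂ) :
    p.sum (fun m a => a * ((∑ k, c k * w k ^ m) + γ * m * z ^ m))
      = (∑ k, c k * p.eval (w k)) + γ * (z * p.derivative.eval z) := by
  have h1 : ∀ (m : ℕ) (a : ℂ), a * ((∑ k, c k * w k ^ m) + γ * (m : ℂ) * z ^ m)
      = (∑ k, c k * (a * w k ^ m)) + γ * (a * m * z ^ m) := by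
    intro m a
    rw [mul_add, Finset.mul_sum]
    congr 1
    · exact Finset.sum_congr rfl fun k _ => by ring
    · ring
  simp_rw [h1]
  rw [Polynomial.sum_add]
  have e1 : p.sum (fun m a => ∑ k, c k * (a * w k ^ m)) = ∑ k, c k * p.eval (w k) := by
    rw [Polynomial.sum_def, Finset.sum_comm]
    refine Finset.sum_congr rfl fun k _ => ?_
    rw [← psum_eval p (w k), Polynomial.sum_def, Finset.mul_sum]
  have e2 : p.sum (fun (m : ℕ) (a : ℂ) => γ * (a * m * z ^ m)) = γ * (z * p.derivative.eval z) := by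
    rw [← psum_deriv p z, Polynomial.sum_def, Polynomial.sum_def, Finset.mul_sum]
  rw [e1, e2]

lemma prod_eval_ne_zero {K : ℕ} (w : Fin K → ℂ) (hwinj : Function.Injective w) (j : Fin K) :
    ∏ i ∈ Finset.univ.erase j, (w j - w i) ≠ 0 := by
  rw [Finset.prod_ne_zero_iff]
  intro i hi
  exact sub_ne_zero.mpr fun h => (Finset.ne_of_mem_erase hi) (hwinj h.symm)

lemma deriv_coeff_zero {N K : ℕ} (hKN : K < N) (w : Fin K → ℂ)
    (hwinj : Function.Injective w) (j : Fin K) (hwj : w j ≠ 0) (c : Fin K → ℂ) (γ : ℂ)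
    (H : ∀ n : Fin N, (∑ k, c k * w k ^ (n : ℕ)) + γ * (n : ℕ) * w j ^ (n : ℕ) = 0) :
    γ = 0 := by
  classical
  set p : ℂ[X] := ∏ k, (X - C (w k)) with hp
  have hdeg : p.natDegree = K := by
    rw [hp, Polynomial.natDegree_prod _ _ (fun k _ => Polynomial.X_sub_C_ne_zero (w k))]
    simp
  have hF : ∀ n < N, ((∑ k, c k * w k ^ n) + γ * n * w j ^ n) = 0 := fun n hn => H ⟨n, hn⟩
  have key := psum_vanish p (hdeg ▸ hKN) _ hF
  rw [psum_split p w c γ (w j)] at key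
  have hev : ∀ k, p.eval (w k) = 0 := by
    intro k
    rw [hp, Polynomial.eval_prod]
    exact Finset.prod_eq_zero (Finset.mem_univ k) (by simp)
  have hder : p.derivative.eval (w j) = ∏ i ∈ Finset.univ.erase j, (w j - w i) := by
    have hfac : p = (X - C (w j)) * ∏ i ∈ Finset.univ.erase j, (X - C (w i)) :=
      (Finset.mul_prod_erase Finset.univ _ (Finset.mem_univ j)).symm
    rw [hfac, derivative_mul, Polynomial.derivative_X_sub_C]
    simp [Polynomial.eval_prod]
  simp only [hev, mul_zero, Finset.sum_const_zero, zero_add] at key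
  rcases mul_eq_zero.mp key with h | h
  · exact h
  · rw [hder] at h
    rcases mul_eq_zero.mp h with h' | h'
    · exact absurd h' hwj
    · exact absurd h' (prod_eval_ne_zero w hwinj j)

lemma vand_coeff_zero {N K : ℕ} (hKN : K ≤ N) (w : Fin K → ℂ)
    (hwinj : Function.Injective w) (c : Fin K → ℂ)
    (H : ∀ n : Fin N, (∑ k, c k * w k ^ (n : ℕ)) = 0) :
    ∀ j, c j = 0 := by
  classical
  intro j
  set p : ℂ[X] := ∏ k ∈ Finset.univ.erase j, (X - C (w k)) with hp
  have hdeg : p.natDegree < N := by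
    rw [hp, Polynomial.natDegree_prod _ _ (fun k _ => Polynomial.X_sub_C_ne_zero (w k))]
    simp only [Polynomial.natDegree_X_sub_C, Finset.sum_const, smul_eq_mul, mul_one]
    have := Finset.card_erase_of_mem (Finset.mem_univ j)
    have hK1 : 1 ≤ K := Fin.pos j
    simp only [Finset.card_univ, Fintype.card_fin] at this
    omega
  have hF : ∀ n < N, ((∑ k, c k * w k ^ n) + (0:ℂ) * n * w j ^ n) = 0 := by
    intro n hn
    simpa using H ⟨n, hn⟩
  have key := psum_vanish p hdeg _ hF
  rw [psum_split p w c 0 (w j)] at key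
  have hev : ∀ k, k ≠ j → p.eval (w k) = 0 := by
    intro k hk
    rw [hp, Polynomial.eval_prod]
    exact Finset.prod_eq_zero (Finset.mem_erase.mpr ⟨hk, Finset.mem_univ k⟩) (by simp)
  rw [Finset.sum_eq_single j] at key
  · simp only [zero_mul, add_zero] at key
    rcases mul_eq_zero.mp key with h | h
    · exact h
    · rw [hp, Polynomial.eval_prod] at h
      simp only [Polynomial.eval_sub, Polynomial.eval_X, Polynomial.eval_C] at h
      exact absurd h (prod_eval_ne_zero w hwinj j)
  · intro k _ hk; rw [hev k hk, mul_zero]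
  · intro h; exact absurd (Finset.mem_univ j) h

lemma exp_inj {K : ℕ} (f : Fin K → ℝ) (hf : ∀ k, f k ∈ Set.Ico (0 : ℝ) 1)
    (hinj : Function.Injective f) :
    Function.Injective (fun k => Complex.exp (2 * Real.pi * Complex.I * (f k : ℂ))) := by
  intro k k' h
  simp only at h
  rw [Complex.exp_eq_exp_iff_exists_int] at h
  obtain ⟨m, hm⟩ := h
  apply hinj
  have h2 : (2 * (Real.pi : ℂ) * Complex.I) ≠ 0 := by
    have hpi : (Real.pi : ℂ) ≠ 0 := by exact_mod_cast Real.pi_ne_zero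
    exact mul_ne_zero (mul_ne_zero two_ne_zero hpi) Complex.I_ne_zero
  have : (f k : ℂ) = (f k' : ℂ) + m := by
    refine mul_left_cancel₀ h2 ?_
    rw [hm]; ring
  have hr : f k = f k' + m := by
    have := congrArg Complex.re this
    simpa using this
  have h1 := hf k
  have h2 := hf k'
  simp only [Set.mem_Ico] at h1 h2
  have : m = 0 := by
    rcases h1 with ⟨ha, hb⟩; rcases h2 with ⟨hc, hd⟩
    have h5 : (m : ℝ) < 1 := by linarith [hr]
    have h6 : (-1 : ℝ) < (m : ℝ) := by linarith [hr]
    have h5' : m < 1 := by exact_mod_cast h5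
    have h6' : -1 < m := by exact_mod_cast h6
    omega
  rw [this] at hr
  simpa using hr

lemma mulVec_surj {K L : ℕ} (Φ : Matrix (Fin K) (Fin L) ℂ)
    (hΦ : LinearIndependent ℂ (fun k : Fin K => Φ k)) :
    Function.Surjective Φ.mulVec := by
  have hrank : Φ.rank = K := by simpa using hΦ.rank_matrix
  have hfr : Module.finrank ℂ (Fin K → ℂ) = K := by
    simp [Module.finrank_fintype_fun_eq_card]
  have hrange : LinearMap.range Φ.mulVecLin = ⊤ := by
    apply Submodule.eq_top_of_finrank_eq
    rw [hfr]; exact hrank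
  intro y
  obtain ⟨x, hx⟩ := LinearMap.range_eq_top.mp hrange y
  exact ⟨x, hx⟩

theorem stmt11 (N K L : ℕ) (hKN : K < N) (hdim : (L + 1) * K ≤ L * N)
    (f : Fin K → ℝ) (hf : ∀ k, f k ∈ Set.Ico (0 : ℝ) 1) (hinj : Function.Injective f)
    (A A' : Matrix (Fin N) (Fin K) ℂ)
    (hA : ∀ j k, A j k = sinusoid N (f k) j)
    (hA' : ∀ j k, A' j k = sinusoidDeriv N (f k) j)
    (Φ : Matrix (Fin K) (Fin L) ℂ) (hΦ : LinearIndependent ℂ (fun k : Fin K => Φ k)) :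
    LinearIndependent ℂ
      (Matrix.fromRows ((1 : Matrix (Fin L) (Fin L) ℂ) ⊗ₖ Aᴴ) (khatriRao Φᵀ A')ᴴ) := by
  classical
  set z : Fin K → ℂ := fun k => Complex.exp (2 * Real.pi * Complex.I * (f k : ℂ)) with hzdef
  have hzinj : Function.Injective z := exp_inj f hf hinj
  have hz0 : ∀ k, z k ≠ 0 := fun k => Complex.exp_ne_zero _
  have h2pi : (2 * (Real.pi : ℂ) * Complex.I) ≠ 0 := by
    have hpi : (Real.pi : ℂ) ≠ 0 := by exact_mod_cast Real.pi_ne_zero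
    exact mul_ne_zero (mul_ne_zero two_ne_zero hpi) Complex.I_ne_zero
  have hexp : ∀ (n : Fin N) (k : Fin K),
      Complex.exp (2 * Real.pi * Complex.I * ((n : ℕ) : ℂ) * (f k : ℂ)) = z k ^ (n : ℕ) := by
    intro n k
    rw [hzdef, ← Complex.exp_nat_mul]
    congr 1; push_cast; ring
  have hApow : ∀ (n : Fin N) (k : Fin K), A n k = z k ^ (n : ℕ) := by
    intro n k
    rw [hA, sinusoid, hexp n k]
  have hA'pow : ∀ (n : Fin N) (k : Fin K),
      A' n k = 2 * Real.pi * Complex.I * (((n : ℕ) : ℂ) * z k ^ (n : ℕ)) := by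
    intro n k
    rw [hA']
    show 2 * Real.pi * Complex.I * ((n : ℕ) : ℂ)
        * Complex.exp (2 * Real.pi * Complex.I * ((n : ℕ) : ℂ) * (f k : ℂ)) = _
    rw [hexp n k]; ring
  refine Fintype.linearIndependent_iff.mpr ?_
  intro g hg
  have E : ∀ (l : Fin L) (n : Fin N),
      (∑ k, (starRingEnd ℂ) (g (Sum.inl (l, k))) * z k ^ (n : ℕ))
        + ∑ k, ((starRingEnd ℂ) (g (Sum.inr k)) * (2 * Real.pi * Complex.I)) * Φ k l
            * (((n : ℕ) : ℂ) * z k ^ (n : ℕ)) = 0 := by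
    intro l n
    have h0 := congrFun hg (l, n)
    simp only [Finset.sum_apply, Pi.smul_apply, smul_eq_mul, Pi.zero_apply,
      Fintype.sum_sum_type, Matrix.fromRows_apply_inl, Matrix.fromRows_apply_inr,
      Matrix.kroneckerMap_apply, Matrix.conjTranspose_apply, Matrix.one_apply,
      khatriRao, Matrix.transpose_apply, Fintype.sum_prod_type, mul_ite, ite_mul,
      one_mul, zero_mul, mul_zero, mul_one, Finset.mem_univ, if_true, star_mul'] at h0
    rw [Finset.sum_comm] at h0
    simp only [Finset.sum_ite_eq', Finset.mem_univ, if_true] at h0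
    have h1 := congrArg (starRingEnd ℂ) h0
    simp only [map_add, map_sum, _root_.map_mul, map_zero, Complex.star_def,
      Complex.conj_conj] at h1
    rw [← h1]
    congr 1
    · exact Finset.sum_congr rfl fun k _ => by rw [hApow n k]
    · exact Finset.sum_congr rfl fun k _ => by rw [hA'pow n k]; ring
  have hdz : ∀ j, g (Sum.inr j) = 0 := by
    intro j
    obtain ⟨x, hx⟩ := mulVec_surj Φ hΦ (Pi.single j 1)
    have hxk : ∀ k, (∑ l, Φ k l * x l) = (Pi.single j 1 : Fin K → ℂ) k := by
      intro k
      rw [← congrFun hx k]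
      simp [Matrix.mulVec, dotProduct]
    have E2 : ∀ n : Fin N,
        (∑ k, (∑ l, x l * (starRingEnd ℂ) (g (Sum.inl (l, k)))) * z k ^ (n : ℕ))
          + ((starRingEnd ℂ) (g (Sum.inr j)) * (2 * Real.pi * Complex.I)) * ((n : ℕ) : ℂ)
            * z j ^ (n : ℕ) = 0 := by
      intro n
      have h3 : ∑ l, x l * ((∑ k, (starRingEnd ℂ) (g (Sum.inl (l, k))) * z k ^ (n : ℕ))
          + ∑ k, ((starRingEnd ℂ) (g (Sum.inr k)) * (2 * Real.pi * Complex.I)) * Φ k l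
              * (((n : ℕ) : ℂ) * z k ^ (n : ℕ))) = 0 := by
        simp [E _ n]
      have h4 : ∑ l, x l * ((∑ k, (starRingEnd ℂ) (g (Sum.inl (l, k))) * z k ^ (n : ℕ))
          + ∑ k, ((starRingEnd ℂ) (g (Sum.inr k)) * (2 * Real.pi * Complex.I)) * Φ k l
              * (((n : ℕ) : ℂ) * z k ^ (n : ℕ)))
          = (∑ k, (∑ l, x l * (starRingEnd ℂ) (g (Sum.inl (l, k)))) * z k ^ (n : ℕ))
            + ((starRingEnd ℂ) (g (Sum.inr j)) * (2 * Real.pi * Complex.I)) * ((n : ℕ) : ℂ)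
              * z j ^ (n : ℕ) := by
        simp_rw [mul_add, Finset.sum_add_distrib]
        congr 1
        · simp_rw [Finset.mul_sum]
          rw [Finset.sum_comm]
          refine Finset.sum_congr rfl fun k _ => ?_
          rw [Finset.sum_mul]
          exact Finset.sum_congr rfl fun l _ => by ring
        · have step : ∀ l, x l * (∑ k, ((starRingEnd ℂ) (g (Sum.inr k)) * (2 * Real.pi * Complex.I)) * Φ k l
              * (((n : ℕ) : ℂ) * z k ^ (n : ℕ)))
              = ∑ k, ((starRingEnd ℂ) (g (Sum.inr k)) * (2 * Real.pi * Complex.I))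
                * (((n : ℕ) : ℂ) * z k ^ (n : ℕ)) * (Φ k l * x l) := by
            intro l
            rw [Finset.mul_sum]
            exact Finset.sum_congr rfl fun k _ => by ring
          simp_rw [step]
          rw [Finset.sum_comm]
          have : ∀ k, (∑ l, ((starRingEnd ℂ) (g (Sum.inr k)) * (2 * Real.pi * Complex.I))
              * (((n : ℕ) : ℂ) * z k ^ (n : ℕ)) * (Φ k l * x l))
              = ((starRingEnd ℂ) (g (Sum.inr k)) * (2 * Real.pi * Complex.I))
                * (((n : ℕ) : ℂ) * z k ^ (n : ℕ)) * (Pi.single j 1 : Fin K → ℂ) k := by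
            intro k
            rw [← Finset.mul_sum, hxk k]
          simp_rw [this]
          rw [Finset.sum_eq_single j]
          · simp; ring
          · intro k _ hk
            rw [Pi.single_eq_of_ne hk, mul_zero]
          · intro h; exact absurd (Finset.mem_univ j) h
      rw [← h4]; exact h3
    have hγ := deriv_coeff_zero hKN z hzinj j (hz0 j) _ _ E2
    have hc0 : (starRingEnd ℂ) (g (Sum.inr j)) = 0 := by
      rcases mul_eq_zero.mp hγ with h | h
      · exact h
      · exact absurd h h2pi
    have := congrArg (starRingEnd ℂ) hc0
    simpa using this
  have hcz : ∀ l k, g (Sum.inl (l, k)) = 0 := by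
    intro l k
    have EV : ∀ n : Fin N, (∑ k, (starRingEnd ℂ) (g (Sum.inl (l, k))) * z k ^ (n : ℕ)) = 0 := by
      intro n
      have := E l n
      simp only [hdz, map_zero, zero_mul, mul_zero, Finset.sum_const_zero, add_zero] at this
      exact this
    have := vand_coeff_zero (le_of_lt hKN) z hzinj _ EV k
    have := congrArg (starRingEnd ℂ) this
    simpa using this
  rintro (⟨l, k⟩ | k)
  · exact hcz l k
  · exact hdz k
end
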